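/- Uniqueness of the Shapley value for two-person games: any allocation rule φ that assigns to each two-person cost game c on players {A,B} a pair (φ_A(c), φ_B(c)) satisfying efficiency (φ_A + φ_B = c({A,B})), symmetry (c({A}) = c({B}) implies φ_A = φ_B), the dummy player property (if c({A,B}) − c({j}) = c({i}) then φ_i = c({i})), and additivity (φ(c + c') = φ(c) + φ(c')), must coincide with the Shapley rule φ_i(c) = ½·(c({A,B}) + c({i}) − c({j})) on all such games. -/
import Mathlib


/-- Uniqueness of the Shapley value for two-person cost games: any allocation rule
satisfying efficiency, symmetry, the dummy player property, and additivity coincides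
with the Shapley rule. -/
theorem shapley_unique
    (φ : (Finset (Fin 2) → ℝ) → Fin 2 → ℝ)
    (heff : ∀ c : Finset (Fin 2) → ℝ, c ∅ = 0 → φ c 0 + φ c 1 = c Finset.univ)
    (hsym : ∀ c : Finset (Fin 2) → ℝ, c ∅ = 0 → c {0} = c {1} → φ c 0 = φ c 1)
    (hdum : ∀ c : Finset (Fin 2) → ℝ, c ∅ = 0 → ∀ i j : Fin 2, i ≠ j →
      c Finset.univ - c {j} = c {i} → φ c i = c {i})
    (hadd : ∀ c c' : Finset (Fin 2) → ℝ, c ∅ = 0 → c' ∅ = 0 → ∀ i : Fin 2,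
      φ (fun S => c S + c' S) i = φ c i + φ c' i) :
    ∀ c : Finset (Fin 2) → ℝ, c ∅ = 0 → ∀ i j : Fin 2, i ≠ j →
      φ c i = (1 / 2) * (c Finset.univ + c {i} - c {j}) := by
  intro c hc0 i j hij
  set d : Finset (Fin 2) → ℝ := fun S =>
    (if (0 : Fin 2) ∈ S then c {0} else 0) + (if (1 : Fin 2) ∈ S then c {1} else 0) with hd
  set e : Finset (Fin 2) → ℝ := fun S => c S - d S with he
  have hd0 : d ∅ = 0 := by simp [hd]
  have he0 : e ∅ = 0 := by simp [he, hd0, hc0]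
  have hdk : ∀ k : Fin 2, d {k} = c {k} := by
    intro k; fin_cases k <;> simp [hd]
  have hduniv : d Finset.univ = c {0} + c {1} := by simp [hd]
  have hφ : ∀ k, φ c k = φ d k + φ e k := by
    intro k
    have h := hadd d e hd0 he0 k
    have hfun : (fun S => d S + e S) = c := by funext S; simp [he]
    rwa [hfun] at h
  have hcases : (i = 0 ∧ j = 1) ∨ (i = 1 ∧ j = 0) := by omega
  have hφd : φ d i = c {i} := by
    have := hdum d hd0 i j hij (by
      rw [hdk, hdk, hduniv]
      rcases hcases with ⟨hi, hj⟩ | ⟨hi, hj⟩ <;> subst hi <;> subst hj <;> ring)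
    rwa [hdk] at this
  have hek : ∀ k : Fin 2, e {k} = 0 := by
    intro k; simp [he, hdk]
  have hesym : φ e 0 = φ e 1 := hsym e he0 (by rw [hek, hek])
  have heuniv : e Finset.univ = c Finset.univ - (c {0} + c {1}) := by
    rw [he]; simp [hduniv]
  have hesum := heff e he0
  rw [heuniv] at hesum
  have hφe : φ e i = (c Finset.univ - (c {0} + c {1})) / 2 := by
    rcases hcases with ⟨hi, _⟩ | ⟨hi, _⟩ <;> subst hi <;> linarith
  rw [hφ, hφd, hφe]
  rcases hcases with ⟨hi, hj⟩ | ⟨hi, hj⟩ <;> subst hi <;> subst hj <;> ring
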